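/- As x → ∞, κ(x) converges in the extended reals to ∫_{[0,1]} p^{−1} Λ(dp) ∈ (0,∞], where the integrand is +∞ at p = 0. In particular κ(x) → ∞ as x → ∞ if and only if ∫_{[0,1]} p^{−1} Λ(dp) = ∞ (i.e. the Λ-coalescent has no dust component). -/

import Mathlib

open MeasureTheory Real Set Filter Topology

/-- The integrand of `mu`, with its continuous extension `x(x-1)/2` at `p = 0`. -/
noncomputable def muInt (x p : ℝ) : ℝ :=
  if p = 0 then x * (x - 1) / 2
  else (x * p - 1 + (1 - p) ^ x) / p ^ 2

/-- The rate of decrease `μ(x)` of the `Λ`-coalescent. -/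
noncomputable def mu (Λ : Measure ℝ) (x : ℝ) : ℝ :=
  ∫ p in Set.Icc (0:ℝ) 1, muInt x p ∂Λ

/-- The rate of decrease per capita `κ(x) = μ(x)/x`. -/
noncomputable def kappa (Λ : Measure ℝ) (x : ℝ) : ℝ := mu Λ x / x

/-- `∫_{[0,1]} p⁻¹ Λ(dp)` as an extended real number, where the integrand is `+∞` at `p = 0`. -/
noncomputable def dustIntegral (Λ : Measure ℝ) : ENNReal :=
  ∫⁻ p in Set.Icc (0:ℝ) 1, (ENNReal.ofReal p)⁻¹ ∂Λ

/- ### Auxiliary lemmas -/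

lemma muInt_nonneg {x p : ℝ} (hx : 1 ≤ x) (hp0 : 0 ≤ p) (hp1 : p ≤ 1) : 0 ≤ muInt x p := by
  rcases eq_or_ne p 0 with rfl | hp
  · rw [muInt, if_pos rfl]; nlinarith
  · rw [muInt, if_neg hp]
    apply div_nonneg _ (sq_nonneg p)
    have h := one_add_mul_self_le_rpow_one_add (s := -p) (by linarith) hx
    have h' : 1 + x * (-p) ≤ (1 - p) ^ x := by
      simpa [sub_eq_add_neg] using h
    linarith

lemma exp_quad {t : ℝ} (ht : 0 ≤ t) : Real.exp (-t) ≤ 1 - t + t ^ 2 / 2 := by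
  have key : ∀ s : ℝ, HasDerivAt (fun s => (1 - s + s ^ 2 / 2) * Real.exp s)
      (s ^ 2 / 2 * Real.exp s) s := by
    intro s
    have hp : HasDerivAt (fun s : ℝ => s ^ 2) (2 * s) s := by
      simpa using hasDerivAt_pow 2 s
    have h1 : HasDerivAt (fun s : ℝ => 1 - s + s ^ 2 / 2) (-1 + s) s := by
      have := ((hasDerivAt_const s (1:ℝ)).sub (hasDerivAt_id s)).add (hp.div_const 2)
      exact this.congr_deriv (by ring)
    have := h1.mul (Real.hasDerivAt_exp s)
    exact this.congr_deriv (by ring)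
  have hmono : Monotone (fun s => (1 - s + s ^ 2 / 2) * Real.exp s) := by
    apply monotone_of_deriv_nonneg (fun s => (key s).differentiableAt)
    intro s
    rw [(key s).deriv]
    positivity
  have h0 : (1 - (0:ℝ) + 0 ^ 2 / 2) * Real.exp 0 ≤ (1 - t + t ^ 2 / 2) * Real.exp t :=
    hmono ht
  simp only [Real.exp_zero] at h0
  have hE := Real.exp_pos t
  have hne : Real.exp (-t) * Real.exp t = 1 := by
    rw [← Real.exp_add]; simp
  nlinarith

lemma muInt_le {x p : ℝ} (hx : 1 ≤ x) (hp0 : 0 ≤ p) (hp1 : p ≤ 1) : muInt x p ≤ x ^ 2 / 2 := by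
  rcases eq_or_ne p 0 with rfl | hp
  · rw [muInt, if_pos rfl]; nlinarith
  · rw [muInt, if_neg hp]
    have hp' : 0 < p := lt_of_le_of_ne hp0 (Ne.symm hp)
    have hq : (1 - p) ^ x ≤ Real.exp (-(x * p)) := by
      have h1 : (1 - p : ℝ) ≤ Real.exp (-p) := by
        have := Real.add_one_le_exp (-p); linarith
      calc (1 - p) ^ x ≤ (Real.exp (-p)) ^ x :=
            Real.rpow_le_rpow (by linarith) h1 (by linarith)
        _ = Real.exp (-p * x) := (Real.exp_mul (-p) x).symm
        _ = Real.exp (-(x * p)) := by ring_nf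
    have h2 := exp_quad (t := x * p) (by positivity)
    rw [div_le_iff₀ (by positivity : (0:ℝ) < p ^ 2)]
    nlinarith

lemma measurable_muInt (x : ℝ) : Measurable (muInt x) := by
  unfold muInt
  apply Measurable.ite (measurableSet_singleton 0) measurable_const
  fun_prop

lemma muInt_div_eq {x p : ℝ} (hx : x ≠ 0) (hp : p ≠ 0) :
    muInt x p / x = (p - (1 - (1 - p) ^ x) / x) / p ^ 2 := by
  rw [muInt, if_neg hp]
  field_simp
  ring

lemma one_sub_rpow_div_antitone {q : ℝ} (hq0 : 0 ≤ q) {x y : ℝ}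
    (hx : 1 ≤ x) (hxy : x ≤ y) : (1 - q ^ y) / y ≤ (1 - q ^ x) / x := by
  have hx0 : 0 < x := lt_of_lt_of_le one_pos hx
  have hy0 : 0 < y := lt_of_lt_of_le hx0 hxy
  rcases eq_or_lt_of_le hq0 with rfl | hq
  · rw [Real.zero_rpow hx0.ne', Real.zero_rpow hy0.ne']
    simp only [sub_zero]
    exact one_div_le_one_div_of_le hx0 hxy
  · set a := x / y with ha
    have ha0 : 0 < a := div_pos hx0 hy0
    have ha1 : a ≤ 1 := (div_le_one hy0).2 hxy
    have hay : a * y = x := div_mul_cancel₀ x hy0.ne'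
    have hconv := convexOn_exp.2 (Set.mem_univ (y * Real.log q)) (Set.mem_univ (0:ℝ))
      ha0.le (by linarith : (0:ℝ) ≤ 1 - a) (by ring)
    simp only [smul_eq_mul, mul_zero, add_zero, Real.exp_zero, mul_one] at hconv
    have hqx : q ^ x = Real.exp (a * (y * Real.log q)) := by
      rw [Real.rpow_def_of_pos hq]
      congr 1
      rw [← hay]; ring
    have hqy : q ^ y = Real.exp (y * Real.log q) := by
      rw [Real.rpow_def_of_pos hq]; congr 1; ring
    have h1 : q ^ x ≤ a * q ^ y + (1 - a) := by
      rw [hqx, hqy]; exact hconv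
    have h2 : q ^ x * y ≤ x * q ^ y + (y - x) := by
      have := mul_le_mul_of_nonneg_right h1 hy0.le
      calc q ^ x * y ≤ (a * q ^ y + (1 - a)) * y := this
        _ = (a * y) * q ^ y + y - (a * y) := by ring
        _ = x * q ^ y + (y - x) := by rw [hay]; ring
    rw [div_le_div_iff₀ hy0 hx0]
    nlinarith

lemma muInt_div_mono {p : ℝ} (hp0 : 0 ≤ p) (hp1 : p ≤ 1) {x y : ℝ}
    (hx : 1 ≤ x) (hxy : x ≤ y) : muInt x p / x ≤ muInt y p / y := by
  have hx0 : 0 < x := lt_of_lt_of_le one_pos hx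
  have hy0 : 0 < y := lt_of_lt_of_le hx0 hxy
  rcases eq_or_ne p 0 with rfl | hp
  · have ex : muInt x 0 = x * (x - 1) / 2 := if_pos rfl
    have ey : muInt y 0 = y * (y - 1) / 2 := if_pos rfl
    have e1 : x * (x - 1) / 2 / x = (x - 1) / 2 := by field_simp
    have e2 : y * (y - 1) / 2 / y = (y - 1) / 2 := by field_simp
    rw [ex, ey, e1, e2]
    linarith
  · have hp' : 0 < p := lt_of_le_of_ne hp0 (Ne.symm hp)
    rw [muInt_div_eq hx0.ne' hp, muInt_div_eq hy0.ne' hp]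
    apply div_le_div_of_nonneg_right ?_ (by positivity)
    have := one_sub_rpow_div_antitone (q := 1 - p) (by linarith) hx hxy
    linarith

lemma tendsto_muInt_div_real {p : ℝ} (hp : 0 < p) (hp1 : p ≤ 1) :
    Tendsto (fun x => muInt x p / x) atTop (𝓝 (1 / p)) := by
  have hq0 : (0:ℝ) ≤ 1 - p := by linarith
  have hg : Tendsto (fun x : ℝ => 1 / x) atTop (𝓝 0) := by
    simpa only [one_div] using tendsto_inv_atTop_zero (𝕜 := ℝ)
  have hsq : Tendsto (fun x : ℝ => (1 - (1 - p) ^ x) / x) atTop (𝓝 0) := by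
    apply squeeze_zero' ?_ ?_ hg
    · filter_upwards [eventually_ge_atTop (1:ℝ)] with x hx
      have h1 : (1 - p) ^ x ≤ 1 := Real.rpow_le_one hq0 (by linarith) (by linarith)
      have h2 : (0:ℝ) < x := by linarith
      exact div_nonneg (by linarith) h2.le
    · filter_upwards [eventually_ge_atTop (1:ℝ)] with x hx
      have h2 : (0:ℝ) < x := by linarith
      have h3 := Real.rpow_nonneg hq0 x
      gcongr
      linarith
  have hmain : Tendsto (fun x : ℝ => (p - (1 - (1 - p) ^ x) / x) / p ^ 2) atTop
      (𝓝 ((p - 0) / p ^ 2)) :=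
    (tendsto_const_nhds.sub hsq).div_const (p ^ 2)
  have he : (p - 0) / p ^ 2 = 1 / p := by
    field_simp
    ring
  rw [he] at hmain
  apply hmain.congr'
  filter_upwards [eventually_ge_atTop (1:ℝ)] with x hx
  exact (muInt_div_eq (by linarith) hp.ne').symm

lemma tendsto_ofReal_muInt_div {p : ℝ} (hp0 : 0 ≤ p) (hp1 : p ≤ 1) :
    Tendsto (fun x => ENNReal.ofReal (muInt x p / x)) atTop (𝓝 (ENNReal.ofReal p)⁻¹) := by
  rcases eq_or_lt_of_le hp0 with rfl | hp
  · simp only [ENNReal.ofReal_zero, ENNReal.inv_zero]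
    have hcong : (fun x : ℝ => (x - 1) / 2) =ᶠ[atTop] (fun x => muInt x 0 / x) := by
      filter_upwards [eventually_ge_atTop (1:ℝ)] with x hx
      rw [muInt, if_pos rfl]
      field_simp
    have hT : Tendsto (fun x : ℝ => (x - 1) / 2) atTop atTop :=
      (tendsto_atTop_add_const_right atTop (-1) tendsto_id).atTop_div_const (by norm_num)
    exact ENNReal.tendsto_ofReal_atTop.comp ((hT.congr' hcong))
  · have h := (ENNReal.continuous_ofReal.tendsto _).comp (tendsto_muInt_div_real hp hp1)
    rw [Function.comp_def] at h
    rwa [one_div, ENNReal.ofReal_inv_of_pos hp] at h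

/-- As `x → ∞`, `κ(x)` converges in the extended reals to `∫_{[0,1]} p⁻¹ Λ(dp) ∈ (0,∞]`.
In particular `κ(x) → ∞` iff `∫_{[0,1]} p⁻¹ Λ(dp) = ∞` (no dust component). -/
theorem kappa_tendsto_dustIntegral (Λ : Measure ℝ) [IsFiniteMeasure Λ] (hΛ : Λ ≠ 0)
    (hsupp : Λ (Set.Icc (0:ℝ) 1)ᶜ = 0) :
    Tendsto (fun x => ENNReal.ofReal (kappa Λ x)) atTop (𝓝 (dustIntegral Λ)) ∧
    0 < dustIntegral Λ ∧
    (Tendsto (kappa Λ) atTop atTop ↔ dustIntegral Λ = ⊤) := by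
  set G : ℝ → ENNReal := fun x => ∫⁻ p in Set.Icc (0:ℝ) 1, ENNReal.ofReal (muInt x p / x) ∂Λ
    with hG
  -- `ofReal (kappa x) = G x` for `x ≥ 1`
  have hkG : ∀ x : ℝ, 1 ≤ x → ENNReal.ofReal (kappa Λ x) = G x := by
    intro x hx
    have hx0 : (0:ℝ) < x := lt_of_lt_of_le one_pos hx
    have hint : Integrable (fun p => muInt x p) (Λ.restrict (Set.Icc 0 1)) := by
      apply Integrable.mono' (integrable_const (x ^ 2 / 2))
        ((measurable_muInt x).aestronglyMeasurable)
      filter_upwards [ae_restrict_mem measurableSet_Icc] with p hp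
      rw [Real.norm_eq_abs, abs_of_nonneg (muInt_nonneg hx hp.1 hp.2)]
      exact muInt_le hx hp.1 hp.2
    have hkap : kappa Λ x = ∫ p in Set.Icc (0:ℝ) 1, muInt x p / x ∂Λ := by
      rw [kappa, mu, ← integral_div]
    rw [hkap]
    apply ofReal_integral_eq_lintegral_ofReal (hint.div_const x)
    filter_upwards [ae_restrict_mem measurableSet_Icc] with p hp
    exact div_nonneg (muInt_nonneg hx hp.1 hp.2) hx0.le
  -- `G` is monotone on `[1, ∞)`
  have hGmono : ∀ x y : ℝ, 1 ≤ x → x ≤ y → G x ≤ G y := by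
    intro x y hx hxy
    apply lintegral_mono_ae
    filter_upwards [ae_restrict_mem measurableSet_Icc] with p hp
    exact ENNReal.ofReal_le_ofReal (muInt_div_mono hp.1 hp.2 hx hxy)
  set K : ℝ → ENNReal := fun x => G (max 1 x) with hK
  have hKmono : Monotone K := by
    intro x y hxy
    exact hGmono _ _ (le_max_left 1 x) (max_le_max le_rfl hxy)
  have hKtop : Tendsto K atTop (𝓝 (⨆ x, K x)) := tendsto_atTop_iSup hKmono
  -- the sequence `n ↦ G (n+1)` tends to `dustIntegral Λ`
  have hseq : Tendsto (fun n : ℕ => G ((n : ℝ) + 1)) atTop (𝓝 (dustIntegral Λ)) := by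
    have hcast : Tendsto (fun n : ℕ => (n : ℝ) + 1) atTop atTop :=
      tendsto_atTop_add_const_right atTop 1 tendsto_natCast_atTop_atTop
    apply lintegral_tendsto_of_tendsto_of_monotone
    · intro n
      exact ((measurable_muInt _).div_const _).ennreal_ofReal.aemeasurable
    · filter_upwards [ae_restrict_mem measurableSet_Icc] with p hp
      intro n m hnm
      exact ENNReal.ofReal_le_ofReal (muInt_div_mono hp.1 hp.2
        (by exact_mod_cast le_add_of_nonneg_left (Nat.cast_nonneg n))
        (by exact_mod_cast add_le_add_left (Nat.cast_le.2 hnm) 1))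
    · filter_upwards [ae_restrict_mem measurableSet_Icc] with p hp
      exact (tendsto_ofReal_muInt_div hp.1 hp.2).comp hcast
  -- hence `⨆ K = dustIntegral Λ` and `K` tends to it
  have hKseq : Tendsto (fun n : ℕ => K ((n : ℝ) + 1)) atTop (𝓝 (⨆ x, K x)) := by
    apply hKtop.comp
    exact tendsto_atTop_add_const_right atTop 1 tendsto_natCast_atTop_atTop
  have hKeq : ∀ n : ℕ, K ((n : ℝ) + 1) = G ((n : ℝ) + 1) := by
    intro n
    simp only [hK, max_eq_right (by exact_mod_cast le_add_of_nonneg_left (Nat.cast_nonneg n) :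
      (1:ℝ) ≤ (n : ℝ) + 1)]
  have hsup : (⨆ x, K x) = dustIntegral Λ := by
    apply tendsto_nhds_unique hKseq
    exact hseq.congr (fun n => (hKeq n).symm)
  have hmain : Tendsto (fun x => ENNReal.ofReal (kappa Λ x)) atTop (𝓝 (dustIntegral Λ)) := by
    rw [← hsup]
    apply hKtop.congr'
    filter_upwards [eventually_ge_atTop (1:ℝ)] with x hx
    rw [hK]
    simp only [max_eq_right hx]
    exact (hkG x hx).symm
  -- positivity
  have hpos : 0 < dustIntegral Λ := by
    have h1 : Λ (Set.Icc (0:ℝ) 1) ≤ dustIntegral Λ := by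
      have : Λ (Set.Icc (0:ℝ) 1) = ∫⁻ _ in Set.Icc (0:ℝ) 1, 1 ∂Λ := by
        rw [setLIntegral_const, one_mul]
      rw [this]
      apply lintegral_mono_ae
      filter_upwards [ae_restrict_mem measurableSet_Icc] with p hp
      rw [ENNReal.one_le_inv]
      exact ENNReal.ofReal_le_one.2 hp.2
    have h2 : 0 < Λ (Set.Icc (0:ℝ) 1) := by
      by_contra h
      push_neg at h
      have h0 : Λ (Set.Icc (0:ℝ) 1) = 0 := le_antisymm h zero_le
      apply hΛ
      have : Λ Set.univ = 0 := by
        have := measure_union_le (μ := Λ) (Set.Icc (0:ℝ) 1) (Set.Icc (0:ℝ) 1)ᶜ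
        rw [Set.union_compl_self, h0, hsupp, add_zero] at this
        exact le_antisymm this zero_le
      ext s hs
      simp only [Measure.coe_zero, Pi.zero_apply]
      exact le_antisymm ((measure_mono (Set.subset_univ s)).trans this.le) zero_le
    exact lt_of_lt_of_le h2 h1
  refine ⟨hmain, hpos, ?_, ?_⟩
  · intro h
    exact tendsto_nhds_unique hmain (ENNReal.tendsto_ofReal_atTop.comp h)
  · intro h
    rw [h] at hmain
    rw [tendsto_atTop]
    intro b
    have hev : ∀ᶠ y in 𝓝 (⊤ : ENNReal), ENNReal.ofReal b < y :=
      eventually_gt_nhds (ENNReal.ofReal_lt_top)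
    filter_upwards [hmain.eventually hev] with x hx
    by_contra hcon
    push_neg at hcon
    exact absurd (ENNReal.ofReal_le_ofReal hcon.le) (not_le.2 hx)
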